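/- Suppose G : (0,∞) → ℝ is smooth with w = G' > 0, satisfying (A1): d·w'(d) + (1 - 1/n)·w(d) ≤ 0 for all d > 0, and (A2): d·w(d) ≥ c > 0 for all d ≥ 1. Then for all d ≥ 1, G(d) − d·G'(d) ≥ G(1) − w(1) + c·(1 − 1/n)·log d. In particular, if n ≥ 2, G(d) − d·G'(d) → ∞ as d → ∞ (condition (B2)). -/

import Mathlib

open Filter

/-- Under (A1) and (A2), `G(d) - d·G'(d) ≥ G(1) - w(1) + c(1-1/n)·log d` for `d ≥ 1`;
in particular the coercivity condition (B2) holds. -/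
theorem stmt_1 (n : ℕ) (hn : 2 ≤ n) (c : ℝ) (hc : 0 < c) (G w w' : ℝ → ℝ)
    (hG : ∀ d ∈ Set.Ioi (0:ℝ), HasDerivAt G (w d) d)
    (hw : ∀ d ∈ Set.Ioi (0:ℝ), HasDerivAt w (w' d) d)
    (hwpos : ∀ d ∈ Set.Ioi (0:ℝ), 0 < w d)
    (hA1 : ∀ d ∈ Set.Ioi (0:ℝ), d * w' d + (1 - 1/(n:ℝ)) * w d ≤ 0)
    (hA2 : ∀ d : ℝ, 1 ≤ d → c ≤ d * w d) :
    (∀ d : ℝ, 1 ≤ d →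
      G 1 - w 1 + c * (1 - 1/(n:ℝ)) * Real.log d ≤ G d - d * w d) ∧
    Tendsto (fun d => G d - d * w d) atTop atTop := by
  have hnpos : (0:ℝ) < (n:ℝ) := by positivity
  have hfrac : (0:ℝ) < 1 - 1/(n:ℝ) := by
    have : (1:ℝ)/(n:ℝ) ≤ 1/2 := by
      apply one_div_le_one_div_of_le <;> [norm_num; exact_mod_cast hn]
    linarith
  set F : ℝ → ℝ := fun d => G d - d * w d - c * (1 - 1/(n:ℝ)) * Real.log d with hF
  have hFderiv : ∀ d ∈ Set.Ioi (0:ℝ),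
      HasDerivAt F (-(d * w' d) - c * (1 - 1/(n:ℝ)) / d) d := by
    intro d hd
    have hd0 : (0:ℝ) < d := hd
    have h1 : HasDerivAt (fun d => d * w d) (1 * w d + d * w' d) d :=
      (hasDerivAt_id d).mul (hw d hd)
    have h2 : HasDerivAt (fun d => c * (1 - 1/(n:ℝ)) * Real.log d)
        (c * (1 - 1/(n:ℝ)) * (1/d)) d := by
      simpa [one_div] using (Real.hasDerivAt_log hd0.ne').const_mul (c * (1 - 1/(n:ℝ)))
    have := ((hG d hd).sub h1).sub h2
    exact this.congr_deriv (by ring)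
  have hMono : MonotoneOn F (Set.Ici (1:ℝ)) := by
    apply monotoneOn_of_deriv_nonneg (convex_Ici 1)
    · intro x hx
      exact (hFderiv x (show (0:ℝ) < x from lt_of_lt_of_le one_pos hx)).continuousAt.continuousWithinAt
    · intro x hx
      rw [interior_Ici] at hx
      exact (hFderiv x (show (0:ℝ) < x from lt_trans one_pos hx)).differentiableAt.differentiableWithinAt
    · intro x hx
      rw [interior_Ici] at hx
      have hx1 : (1:ℝ) ≤ x := le_of_lt hx
      have hx0 : (0:ℝ) < x := lt_trans one_pos hx
      rw [(hFderiv x hx0).deriv]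
      have h1 := hA1 x hx0
      have h2 := hA2 x hx1
      have : c * (1 - 1/(n:ℝ)) / x ≤ (1 - 1/(n:ℝ)) * w x := by
        rw [div_le_iff₀ hx0]
        calc c * (1 - 1/(n:ℝ)) ≤ (x * w x) * (1 - 1/(n:ℝ)) := by
              exact mul_le_mul_of_nonneg_right h2 hfrac.le
          _ = (1 - 1/(n:ℝ)) * w x * x := by ring
      linarith
  have key : ∀ d : ℝ, 1 ≤ d →
      G 1 - w 1 + c * (1 - 1/(n:ℝ)) * Real.log d ≤ G d - d * w d := by
    intro d hd
    have := hMono (Set.self_mem_Ici) hd hd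
    simp only [hF, Real.log_one, mul_zero, sub_zero, one_mul] at this
    linarith
  refine ⟨key, ?_⟩
  apply tendsto_atTop_mono' _ _ (tendsto_atTop_add_const_left atTop (G 1 - w 1)
    ((Real.tendsto_log_atTop.const_mul_atTop (by positivity : (0:ℝ) < c * (1 - 1/(n:ℝ))))))
  filter_upwards [eventually_ge_atTop (1:ℝ)] with d hd
  exact key d hd
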